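/- Let K be a field with char K ≠ 2, let D ∈ S_K with deg D = 2d, and let p, q ∈ K[T] be coprime polynomials with q ≠ 0. Then p/q is, up to sign, a convergent of √D (i.e. there is a convergent p_n/q_n of √D with p/q = ±p_n/q_n) if and only if deg(p² − D·q²) ≤ d − 1. -/

import Mathlib

noncomputable section

namespace PaperCF

variable {K : Type*} [Field K]

/-- The element `T` of `K((T⁻¹))`, where `K((T⁻¹))` is modeled as the field
`LaurentSeries K` of Laurent series in the variable `t = T⁻¹`. -/
def Tvar (K : Type*) [Field K] : LaurentSeries K := (HahnSeries.single (-1 : ℤ) (1 : K))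

/-- The embedding of `K[T]` into `K((T⁻¹))`, sending the polynomial variable to `T = t⁻¹`. -/
def emb : Polynomial K →+* LaurentSeries K := (Polynomial.aeval (Tvar K)).toRingHom

/-- The polynomial part `⌊α⌋` of a formal Laurent series `α ∈ K((T⁻¹))`. -/
def polyPart (α : LaurentSeries K) : Polynomial K :=
  ∑ i ∈ Finset.range ((-α.order).toNat + 1), Polynomial.monomial i (α.coeff (-(i : ℤ)))

/-- The complete quotients `αₙ` of the regular continued fraction expansion of `α`
(with the convention `0⁻¹ = 0`, so that `cq α n = 0` for all `n` past the end of a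
finite expansion). -/
def cq (α : LaurentSeries K) : ℕ → LaurentSeries K
  | 0 => α
  | n + 1 => (cq α n - emb (polyPart (cq α n)))⁻¹

/-- The partial quotients `aₙ = ⌊αₙ⌋` of the regular continued fraction expansion of `α`. -/
def pq (α : LaurentSeries K) (n : ℕ) : Polynomial K := polyPart (cq α n)

/-- The continuants `(pₙ, qₙ)` of the regular continued fraction expansion of `α`. -/
def cont (α : LaurentSeries K) : ℕ → Polynomial K × Polynomial K
  | 0 => (pq α 0, 1)
  | 1 => (pq α 1 * pq α 0 + 1, pq α 1)
  | n + 2 => (pq α (n + 2) * (cont α (n + 1)).1 + (cont α n).1,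
              pq α (n + 2) * (cont α (n + 1)).2 + (cont α n).2)

/-- `pₙ`. -/
def contP (α : LaurentSeries K) (n : ℕ) : Polynomial K := (cont α n).1

/-- `qₙ`. -/
def contQ (α : LaurentSeries K) (n : ℕ) : Polynomial K := (cont α n).2

/-- The `n`-th partial quotient (and hence the `n`-th convergent) of `α` genuinely exists. -/
def ConvAt (α : LaurentSeries K) (n : ℕ) : Prop := n = 0 ∨ cq α n ≠ 0

/-- `K(α) = sup_{n ≥ 1} deg aₙ`, as an extended natural number. -/
def KK (α : LaurentSeries K) : ℕ∞ :=
  ⨆ n : {n : ℕ // 1 ≤ n ∧ cq α n ≠ 0}, ((pq α n.1).natDegree : ℕ∞)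

/-- `ōK(α) = limsup_n deg aₙ`. -/
def KKbar (α : LaurentSeries K) : ℕ∞ :=
  Filter.limsup (fun n => ((pq α n).natDegree : ℕ∞)) Filter.atTop

/-- `α` is a rational function, i.e. an element of `K(T) ⊆ K((T⁻¹))`. -/
def IsRat (α : LaurentSeries K) : Prop :=
  ∃ p q : Polynomial K, q ≠ 0 ∧ α * emb q = emb p

/-- Two Laurent series are equivalent if they differ by a Möbius transformation with
matrix in `GL₂(K[T])`. -/
def MEquiv (α β : LaurentSeries K) : Prop :=
  ∃ a b c d : Polynomial K, IsUnit (a * d - b * c) ∧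
    emb c * α + emb d ≠ 0 ∧ β = (emb a * α + emb b) / (emb c * α + emb d)

end PaperCF

namespace PaperCF

variable {K : Type*} [Field K]

open Polynomial HahnSeries

/-- The "degree" of a Laurent series, as an integer (junk value 0 at 0). -/
def dg (α : LaurentSeries K) : ℤ := -α.order

lemma dg_mul {x y : LaurentSeries K} (hx : x ≠ 0) (hy : y ≠ 0) :
    dg (x * y) = dg x + dg y := by
  simp only [dg, HahnSeries.order_mul hx hy]; ring

lemma dg_neg (x : LaurentSeries K) : dg (-x) = dg x := by
  simp [dg, HahnSeries.order_neg]

lemma dg_add_le {x y : LaurentSeries K} (hxy : x + y ≠ 0) :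
    dg (x + y) ≤ max (dg x) (dg y) := by
  have := HahnSeries.min_order_le_order_add hxy
  simp only [dg]
  omega

lemma dg_one : dg (1 : LaurentSeries K) = 0 := by simp [dg, HahnSeries.order_one]

lemma dg_inv {x : LaurentSeries K} (hx : x ≠ 0) : dg x⁻¹ = -dg x := by
  have h : x * x⁻¹ = 1 := mul_inv_cancel₀ hx
  have := dg_mul hx (inv_ne_zero hx)
  rw [h, dg_one] at this
  omega

lemma dg_add_eq_left {x y : LaurentSeries K} (hx : x ≠ 0) (h : dg y < dg x) :
    x + y ≠ 0 ∧ dg (x + y) = dg x := by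
  have hy' : x.orderTop < y.orderTop := by
    rcases eq_or_ne y 0 with rfl | hy
    · rw [HahnSeries.orderTop_zero, ← HahnSeries.order_eq_orderTop_of_ne_zero hx]
      exact WithTop.coe_lt_top _
    · rw [← HahnSeries.order_eq_orderTop_of_ne_zero hx, ← HahnSeries.order_eq_orderTop_of_ne_zero hy]
      exact_mod_cast by simp only [dg] at h; omega
  have hord := HahnSeries.orderTop_add_eq_left hy'
  have hne : x + y ≠ 0 := by
    intro h0
    rw [h0, HahnSeries.orderTop_zero, ← HahnSeries.order_eq_orderTop_of_ne_zero hx] at hord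
    exact (WithTop.coe_ne_top hord.symm)
  refine ⟨hne, ?_⟩
  rw [← HahnSeries.order_eq_orderTop_of_ne_zero hne, ← HahnSeries.order_eq_orderTop_of_ne_zero hx] at hord
  simp only [dg]
  exact_mod_cast congrArg (fun z : ℤ => -z) (WithTop.coe_injective hord)

/-! ### The embedding `emb` -/

lemma single_one_pow (n : ℕ) :
    (HahnSeries.single (-1 : ℤ) (1 : K)) ^ n = HahnSeries.single (-(n : ℤ)) (1 : K) := by
  induction n with
  | zero => simp [HahnSeries.single_zero_one]
  | succ n ih =>
    rw [pow_succ, ih, HahnSeries.single_mul_single, one_mul]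
    congr 1
    push_cast
    ring

lemma emb_monomial (n : ℕ) (c : K) :
    emb (Polynomial.monomial n c) = HahnSeries.single (-(n : ℤ)) c := by
  simp only [emb, AlgHom.toRingHom_eq_coe, RingHom.coe_coe, Polynomial.aeval_monomial, Tvar]
  rw [single_one_pow]
  have hC : (algebraMap K (LaurentSeries K)) c = HahnSeries.single (0 : ℤ) c := by
    rw [HahnSeries.algebraMap_apply']
    rw [show (algebraMap K (PowerSeries K)) c = PowerSeries.C c from rfl]
    rw [HahnSeries.ofPowerSeries_C, HahnSeries.C_apply]
  rw [hC, HahnSeries.single_mul_single, zero_add, mul_one]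

lemma emb_coeff_neg (f : Polynomial K) (n : ℕ) : (emb f).coeff (-(n : ℤ)) = f.coeff n := by
  induction f using Polynomial.induction_on' with
  | add p q hp hq => simp [map_add, HahnSeries.coeff_add, hp, hq]
  | monomial m c =>
    rw [emb_monomial, Polynomial.coeff_monomial, HahnSeries.coeff_single]
    by_cases h : m = n <;> simp [h, neg_inj]
    · intro hc; omega

lemma emb_coeff_pos (f : Polynomial K) {j : ℤ} (hj : 0 < j) : (emb f).coeff j = 0 := by
  induction f using Polynomial.induction_on' with
  | add p q hp hq => simp [map_add, HahnSeries.coeff_add, hp, hq]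
  | monomial m c =>
    rw [emb_monomial, HahnSeries.coeff_single_of_ne]
    omega

lemma emb_ne_zero {f : Polynomial K} (hf : f ≠ 0) : emb f ≠ 0 := by
  intro h
  have := emb_coeff_neg f f.natDegree
  rw [h] at this
  exact (Polynomial.leadingCoeff_ne_zero.mpr hf) ((HahnSeries.coeff_zero).symm.trans this).symm

lemma emb_eq_zero_iff {f : Polynomial K} : emb f = 0 ↔ f = 0 :=
  ⟨fun h => by by_contra hf; exact emb_ne_zero hf h, fun h => by simp [h, map_zero]⟩

lemma emb_order {f : Polynomial K} (hf : f ≠ 0) :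
    (emb f).order = -(f.natDegree : ℤ) := by
  have hne := emb_ne_zero hf
  have h1 : (emb f).order ≤ -(f.natDegree : ℤ) := by
    apply HahnSeries.order_le_of_coeff_ne_zero
    rw [emb_coeff_neg]
    exact Polynomial.leadingCoeff_ne_zero.mpr hf
  have h2 : -(f.natDegree : ℤ) ≤ (emb f).order := by
    by_contra hlt
    push_neg at hlt
    have hc := (mt HahnSeries.coeff_order_eq_zero.mp hne)
    set j := (emb f).order with hj
    rcases le_or_gt j 0 with hj0 | hj0
    · have hk : j = -((-j).toNat : ℤ) := by omega
      rw [hk, emb_coeff_neg] at hc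
      have := Polynomial.le_natDegree_of_ne_zero hc
      omega
    · exact hc (emb_coeff_pos f hj0)
  omega

lemma dg_emb {f : Polynomial K} (hf : f ≠ 0) : dg (emb f) = (f.natDegree : ℤ) := by
  simp [dg, emb_order hf]

lemma emb_inj {f g : Polynomial K} (h : emb f = emb g) : f = g := by
  have h0 : emb (f - g) = 0 := by rw [map_sub, h, sub_self]
  have := emb_eq_zero_iff.mp h0
  linear_combination this

/-! ### The polynomial part -/

lemma polyPart_coeff (α : LaurentSeries K) (k : ℕ) :
    (polyPart α).coeff k =
      if k ≤ (-α.order).toNat then α.coeff (-(k : ℤ)) else 0 := by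
  rw [polyPart, Polynomial.finset_sum_coeff]
  by_cases h : k ≤ (-α.order).toNat
  · rw [Finset.sum_eq_single k]
    · simp [Polynomial.coeff_monomial, h]
    · intro b _ hb; simp [Polynomial.coeff_monomial, hb]
    · intro hk; exact absurd (Finset.mem_range.mpr (by omega)) hk
  · rw [if_neg h, Finset.sum_eq_zero]
    intro i hi
    rw [Polynomial.coeff_monomial, if_neg]
    rw [Finset.mem_range] at hi
    omega

lemma frac_coeff (α : LaurentSeries K) {j : ℤ} (hj : j ≤ 0) :
    (α - emb (polyPart α)).coeff j = 0 := by
  rw [HahnSeries.coeff_sub]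
  have hk : j = -(((-j).toNat : ℕ) : ℤ) := by omega
  rw [hk, emb_coeff_neg, polyPart_coeff]
  by_cases h : (-j).toNat ≤ (-α.order).toNat
  · rw [if_pos h, sub_self]
  · rw [if_neg h, sub_zero, ← hk]
    apply HahnSeries.coeff_eq_zero_of_lt_order
    omega

lemma frac_order_pos {α : LaurentSeries K} (h : α - emb (polyPart α) ≠ 0) :
    0 < (α - emb (polyPart α)).order := by
  by_contra hle
  push_neg at hle
  exact (mt HahnSeries.coeff_order_eq_zero.mp h) (frac_coeff α hle)

lemma polyPart_natDegree {α : LaurentSeries K} (hα : α ≠ 0) (h : α.order ≤ 0) :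
    polyPart α ≠ 0 ∧ ((polyPart α).natDegree : ℤ) = dg α := by
  set N := (-α.order).toNat with hN
  have hordN : α.order = -(N : ℤ) := by omega
  have hcN : (polyPart α).coeff N ≠ 0 := by
    rw [polyPart_coeff, if_pos le_rfl, ← hordN]
    exact (mt HahnSeries.coeff_order_eq_zero.mp hα)
  have hne : polyPart α ≠ 0 := fun h0 => hcN (by simp [h0])
  refine ⟨hne, ?_⟩
  have hle : (polyPart α).natDegree ≤ N := by
    rw [Polynomial.natDegree_le_iff_coeff_eq_zero]
    intro m hm
    rw [polyPart_coeff, if_neg (by omega)]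
  have hge : N ≤ (polyPart α).natDegree := Polynomial.le_natDegree_of_ne_zero hcN
  have hEq : (polyPart α).natDegree = N := le_antisymm hle hge
  rw [hEq]
  simp only [dg]
  omega


/-! ### Rationality -/

lemma isRat_emb (f : Polynomial K) : IsRat (emb f) :=
  ⟨f, 1, one_ne_zero, by rw [map_one, mul_one]⟩

lemma ne_zero_of_not_isRat {α : LaurentSeries K} (h : ¬ IsRat α) : α ≠ 0 := by
  intro h0; exact h ⟨0, 1, one_ne_zero, by simp [h0]⟩

lemma not_isRat_sub_emb {α : LaurentSeries K} (h : ¬ IsRat α) (f : Polynomial K) :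
    ¬ IsRat (α - emb f) := by
  rintro ⟨p, q, hq, hpq⟩
  exact h ⟨p + f * q, q, hq, by rw [map_add, map_mul, ← hpq]; ring⟩

lemma not_isRat_inv {α : LaurentSeries K} (h : ¬ IsRat α) : ¬ IsRat α⁻¹ := by
  have hα : α ≠ 0 := ne_zero_of_not_isRat h
  rintro ⟨p, q, hq, hpq⟩
  have hp : p ≠ 0 := by
    rintro rfl
    rw [map_zero, mul_eq_zero] at hpq
    rcases hpq with h1 | h1
    · exact inv_ne_zero hα h1
    · exact emb_ne_zero hq h1
  refine h ⟨q, p, hp, ?_⟩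
  have := congrArg (fun z => α * z) hpq
  simp only [← mul_assoc, mul_inv_cancel₀ hα, one_mul] at this
  exact this.symm

lemma cq_not_isRat {α : LaurentSeries K} (h : ¬ IsRat α) (n : ℕ) : ¬ IsRat (cq α n) := by
  induction n with
  | zero => exact h
  | succ n ih =>
    rw [cq]
    exact not_isRat_inv (not_isRat_sub_emb ih _)

lemma cq_ne_zero {α : LaurentSeries K} (h : ¬ IsRat α) (n : ℕ) : cq α n ≠ 0 :=
  ne_zero_of_not_isRat (cq_not_isRat h n)

lemma frac_ne_zero {α : LaurentSeries K} (h : ¬ IsRat α) (n : ℕ) :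
    cq α n - emb (polyPart (cq α n)) ≠ 0 :=
  ne_zero_of_not_isRat (not_isRat_sub_emb (cq_not_isRat h n) _)

lemma cq_succ_inv {α : LaurentSeries K} (h : ¬ IsRat α) (n : ℕ) :
    (cq α (n + 1))⁻¹ = cq α n - emb (pq α n) := by
  rw [cq, inv_inv, pq]

lemma dg_cq_succ {α : LaurentSeries K} (h : ¬ IsRat α) (n : ℕ) :
    1 ≤ dg (cq α (n + 1)) := by
  have hfrac := frac_ne_zero h n
  have hord := frac_order_pos hfrac
  rw [cq, dg_inv hfrac]
  simp only [dg]
  omega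

lemma dg_cq {α : LaurentSeries K} (h : ¬ IsRat α) (hd : 1 ≤ dg α) (n : ℕ) :
    1 ≤ dg (cq α n) := by
  cases n with
  | zero => exact hd
  | succ n => exact dg_cq_succ h n

lemma pq_spec {α : LaurentSeries K} (h : ¬ IsRat α) (hd : 1 ≤ dg α) (n : ℕ) :
    pq α n ≠ 0 ∧ ((pq α n).natDegree : ℤ) = dg (cq α n) := by
  have h1 := dg_cq h hd n
  have h2 : (cq α n).order ≤ 0 := by simp only [dg] at h1; omega
  exact polyPart_natDegree (cq_ne_zero h n) h2

lemma one_le_natDegree_pq {α : LaurentSeries K} (h : ¬ IsRat α) (hd : 1 ≤ dg α) (n : ℕ) :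
    1 ≤ (pq α n).natDegree := by
  have := (pq_spec h hd n).2
  have := dg_cq h hd n
  omega


/-! ### Continuants -/

lemma contP_zero (α : LaurentSeries K) : contP α 0 = pq α 0 := rfl
lemma contQ_zero (α : LaurentSeries K) : contQ α 0 = 1 := rfl
lemma contP_one (α : LaurentSeries K) : contP α 1 = pq α 1 * pq α 0 + 1 := rfl
lemma contQ_one (α : LaurentSeries K) : contQ α 1 = pq α 1 := rfl
lemma contP_rec (α : LaurentSeries K) (n : ℕ) :
    contP α (n + 2) = pq α (n + 2) * contP α (n + 1) + contP α n := rfl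
lemma contQ_rec (α : LaurentSeries K) (n : ℕ) :
    contQ α (n + 2) = pq α (n + 2) * contQ α (n + 1) + contQ α n := rfl

/-- `qₙ α - pₙ`. -/
def EE (α : LaurentSeries K) (n : ℕ) : LaurentSeries K :=
  emb (contQ α n) * α - emb (contP α n)

/-- `EE` with the convention `E₋₁ = -1` prepended. -/
def G (α : LaurentSeries K) : ℕ → LaurentSeries K
  | 0 => -1
  | n + 1 => EE α n

lemma EE_rec (α : LaurentSeries K) (n : ℕ) :
    EE α (n + 1) = emb (pq α (n + 1)) * EE α n + G α n := by
  cases n with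
  | zero =>
    show EE α 1 = emb (pq α 1) * EE α 0 + G α 0
    simp only [EE, G, contP_zero, contQ_zero, contP_one, contQ_one, map_add, map_mul, map_one]
    ring
  | succ n =>
    simp only [EE, G, contP_rec, contQ_rec, map_add, map_mul]
    ring

lemma keyC {α : LaurentSeries K} (h : ¬ IsRat α) (n : ℕ) :
    cq α (n + 1) * EE α n = - G α n := by
  induction n with
  | zero =>
    have hinv := cq_succ_inv h 0
    have h0 : EE α 0 = (cq α 1)⁻¹ := by
      rw [hinv, EE, contP_zero, contQ_zero, map_one, one_mul]
      rfl
    rw [h0, mul_inv_cancel₀ (cq_ne_zero h 1)]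
    simp [G]
  | succ n ih =>
    have hinv := cq_succ_inv h (n + 1)
    have hG : G α n = -(cq α (n + 1) * EE α n) := by rw [ih, neg_neg]
    have hEE : EE α (n + 1) = -((cq α (n + 2))⁻¹ * EE α n) := by
      rw [EE_rec, hG, hinv]
      ring
    have hc := mul_inv_cancel₀ (cq_ne_zero h (n + 2))
    show cq α (n + 2) * EE α (n + 1) = -G α (n + 1)
    rw [show G α (n + 1) = EE α n from rfl, hEE]
    calc cq α (n + 2) * -((cq α (n + 2))⁻¹ * EE α n)
        = -(cq α (n + 2) * (cq α (n + 2))⁻¹ * EE α n) := by ring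
      _ = -EE α n := by rw [hc, one_mul]

lemma EE_ne_zero {α : LaurentSeries K} (h : ¬ IsRat α) {n : ℕ} (hq : contQ α n ≠ 0) :
    EE α n ≠ 0 := by
  intro h0
  rw [EE, sub_eq_zero] at h0
  exact h ⟨contP α n, contQ α n, hq, by rw [mul_comm] at h0; exact h0⟩

/-- Sum of the degrees of the partial quotients `a₁, …, aₙ`. -/
def qdeg (α : LaurentSeries K) (n : ℕ) : ℕ :=
  ∑ k ∈ Finset.range n, (pq α (k + 1)).natDegree

lemma qdeg_succ (α : LaurentSeries K) (n : ℕ) :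
    qdeg α (n + 1) = qdeg α n + (pq α (n + 1)).natDegree :=
  Finset.sum_range_succ _ _

lemma contQ_spec {α : LaurentSeries K} (h : ¬ IsRat α) (hd : 1 ≤ dg α) (n : ℕ) :
    contQ α n ≠ 0 ∧ (contQ α n).natDegree = qdeg α n := by
  have key : ∀ m, (contQ α m ≠ 0 ∧ (contQ α m).natDegree = qdeg α m) ∧
      (contQ α (m + 1) ≠ 0 ∧ (contQ α (m + 1)).natDegree = qdeg α (m + 1)) := by
    intro m
    induction m with
    | zero =>
      refine ⟨⟨one_ne_zero, by simp [contQ_zero, qdeg]⟩, ?_⟩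
      rw [contQ_one]
      exact ⟨(pq_spec h hd 1).1, by simp [qdeg]⟩
    | succ m ihm =>
      obtain ⟨⟨hm0, hmdeg⟩, hm10, hm1deg⟩ := ihm
      refine ⟨⟨hm10, hm1deg⟩, ?_⟩
      have hpq2 := (pq_spec h hd (m + 2)).1
      have hone := one_le_natDegree_pq h hd (m + 2)
      have hbig : contQ α m ≠ 0 ∧
          (pq α (m + 2) * contQ α (m + 1)).natDegree =
            (pq α (m + 2)).natDegree + qdeg α (m + 1) := by
        exact ⟨hm0, by rw [Polynomial.natDegree_mul hpq2 hm10, hm1deg]⟩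
      have hmono : qdeg α m ≤ qdeg α (m + 1) := by
        rw [qdeg_succ]; omega
      have hlt : (contQ α m).degree < (pq α (m + 2) * contQ α (m + 1)).degree := by
        rw [Polynomial.degree_eq_natDegree hm0,
          Polynomial.degree_eq_natDegree (mul_ne_zero hpq2 hm10)]
        exact_mod_cast by omega
      have hdeg := Polynomial.degree_add_eq_left_of_degree_lt
        (p := pq α (m + 2) * contQ α (m + 1)) (q := contQ α m) hlt
      have hne : contQ α (m + 2) ≠ 0 := by
        rw [contQ_rec]
        intro h0
        rw [h0, Polynomial.degree_zero] at hdeg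
        exact (mul_ne_zero hpq2 hm10) (Polynomial.degree_eq_bot.mp hdeg.symm)
      refine ⟨hne, ?_⟩
      show (contQ α (m + 2)).natDegree = qdeg α (m + 2)
      rw [contQ_rec] at hne ⊢
      have hndeg := Polynomial.natDegree_eq_of_degree_eq hdeg
      rw [hndeg, Polynomial.natDegree_mul hpq2 hm10, hm1deg]
      have hq1 : qdeg α (m + 2) = qdeg α (m + 1) + (pq α (m + 2)).natDegree := by
        have := qdeg_succ α (m + 1)
        rwa [show m + 1 + 1 = m + 2 from rfl] at this
      omega
  exact (key n).1

lemma dg_EE {α : LaurentSeries K} (h : ¬ IsRat α) (hd : 1 ≤ dg α) (n : ℕ) :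
    dg (EE α n) = -(qdeg α (n + 1) : ℤ) := by
  induction n with
  | zero =>
    have hk := keyC h 0
    have hEne := EE_ne_zero h (n := 0) (contQ_spec h hd 0).1
    have := dg_mul (cq_ne_zero h 1) hEne
    rw [hk] at this
    simp only [G] at this
    rw [show (-(-1) : LaurentSeries K) = 1 by ring, dg_one] at this
    have hdcq : dg (cq α 1) = ((pq α 1).natDegree : ℤ) := (pq_spec h hd 1).2.symm
    rw [hdcq] at this
    have : dg (EE α 0) = -((pq α 1).natDegree : ℤ) := by omega
    rw [this]
    simp [qdeg]
  | succ n ih =>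
    have hk := keyC h (n + 1)
    have hEne := EE_ne_zero h (n := n + 1) (contQ_spec h hd (n + 1)).1
    have hstep := dg_mul (cq_ne_zero h (n + 2)) hEne
    rw [hk] at hstep
    simp only [G] at hstep
    rw [dg_neg] at hstep
    have hdcq : dg (cq α (n + 2)) = ((pq α (n + 2)).natDegree : ℤ) := (pq_spec h hd (n + 2)).2.symm
    rw [hdcq, ih] at hstep
    have hq1 : qdeg α (n + 2) = qdeg α (n + 1) + (pq α (n + 2)).natDegree := by
      have := qdeg_succ α (n + 1)
      rwa [show n + 1 + 1 = n + 2 from rfl] at this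
    rw [show n + 1 + 1 = n + 2 from rfl, hq1]
    push_cast
    omega

/-! ### Determinant and coprimality -/

lemma det (α : LaurentSeries K) (n : ℕ) :
    contP α n * contQ α (n + 1) - contP α (n + 1) * contQ α n = (-1) ^ (n + 1) := by
  induction n with
  | zero =>
    show contP α 0 * contQ α 1 - contP α 1 * contQ α 0 = (-1) ^ 1
    rw [contP_zero, contQ_zero, contP_one, contQ_one]
    ring
  | succ n ih =>
    rw [contP_rec, contQ_rec, pow_succ]
    linear_combination (-1 : Polynomial K) * ih

lemma coprime_cont (α : LaurentSeries K) (n : ℕ) :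
    IsCoprime (contP α n) (contQ α n) := by
  cases n with
  | zero => exact isCoprime_one_right
  | succ n =>
    have hd := det α n
    have hu : ((-1 : Polynomial K)) ^ (n + 1) * (-1) ^ (n + 1) = 1 := by
      rw [← _root_.pow_add]
      exact Even.neg_one_pow ⟨n + 1, rfl⟩
    exact ⟨-((-1) ^ (n + 1)) * contQ α n, ((-1) ^ (n + 1)) * contP α n,
      by linear_combination ((-1 : Polynomial K)) ^ (n + 1) * hd + hu⟩

/-! ### Bracketing -/

lemma qdeg_ge {α : LaurentSeries K} (h : ¬ IsRat α) (hd : 1 ≤ dg α) (n : ℕ) :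
    n ≤ qdeg α n := by
  induction n with
  | zero => simp [qdeg]
  | succ n ih =>
    have := one_le_natDegree_pq h hd (n + 1)
    rw [qdeg_succ]
    omega

lemma exists_bracket {α : LaurentSeries K} (h : ¬ IsRat α) (hd : 1 ≤ dg α) (N : ℕ) :
    ∃ n, qdeg α n ≤ N ∧ N < qdeg α (n + 1) := by
  have hex : ∃ m, N < qdeg α (m + 1) := ⟨N, by have := qdeg_ge h hd (N + 1); omega⟩
  cases hm' : Nat.find hex with
  | zero =>
    refine ⟨0, by simp [qdeg], ?_⟩
    have := Nat.find_spec hex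
    rwa [hm'] at this
  | succ k =>
    refine ⟨k + 1, ?_, ?_⟩
    · have := Nat.find_min hex (m := k) (by omega)
      omega
    · have := Nat.find_spec hex
      rwa [hm'] at this

/-! ### The key approximation lemma -/

lemma conv_of_small {α : LaurentSeries K} (h : ¬ IsRat α) (hd : 1 ≤ dg α)
    {p q : Polynomial K} (hq : q ≠ 0)
    (hsmall : dg (emb q * α - emb p) < -(q.natDegree : ℤ)) :
    ∃ n, p * contQ α n = contP α n * q := by
  set e := emb q * α - emb p with he
  have he0 : e ≠ 0 := by
    intro h0
    rw [he, sub_eq_zero] at h0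
    exact h ⟨p, q, hq, by rw [mul_comm] at h0; exact h0⟩
  obtain ⟨n, h1, h2⟩ := exists_bracket h hd q.natDegree
  refine ⟨n, ?_⟩
  by_contra hne
  have hGne : p * contQ α n - contP α n * q ≠ 0 := sub_ne_zero.mpr hne
  have hqn0 := (contQ_spec h hd n).1
  have hEne := EE_ne_zero h (n := n) hqn0
  have hembG : emb (p * contQ α n - contP α n * q) =
      emb q * EE α n + -(emb (contQ α n) * e) := by
    simp only [EE, he, map_sub, map_mul]
    ring
  have ht1 : emb q * EE α n ≠ 0 := mul_ne_zero (emb_ne_zero hq) hEne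
  have ht2 : emb (contQ α n) * e ≠ 0 := mul_ne_zero (emb_ne_zero hqn0) he0
  have hd1 : dg (emb q * EE α n) < 0 := by
    rw [dg_mul (emb_ne_zero hq) hEne, dg_emb hq, dg_EE h hd n]
    omega
  have hd2 : dg (-(emb (contQ α n) * e)) < 0 := by
    rw [dg_neg, dg_mul (emb_ne_zero hqn0) he0, dg_emb hqn0, (contQ_spec h hd n).2]
    omega
  have hsum : dg (emb (p * contQ α n - contP α n * q)) < 0 := by
    rw [hembG]
    have := dg_add_le (x := emb q * EE α n) (y := -(emb (contQ α n) * e))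
      (by rw [← hembG]; exact emb_ne_zero hGne)
    omega
  rw [dg_emb hGne] at hsum
  omega


/-! ### Square roots of non-squares are irrational -/

lemma sqrt_not_isRat {D : Polynomial K} (hDnsq : ¬ IsSquare D)
    {β : LaurentSeries K} (hβ : β ^ 2 = emb D) : ¬ IsRat β := by
  rintro ⟨a, b, hb, hab⟩
  have hsq : D * b ^ 2 = a ^ 2 := by
    apply emb_inj
    rw [map_mul, map_pow, map_pow, ← hβ]
    linear_combination (β * emb b + emb a) * hab
  have hdvd : b ^ 2 ∣ a ^ 2 := ⟨D, by linear_combination -hsq⟩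
  have hba : b ∣ a := (IsIntegrallyClosed.pow_dvd_pow_iff two_ne_zero).mp hdvd
  obtain ⟨c, rfl⟩ := hba
  have hb2 : b ^ 2 ≠ 0 := pow_ne_zero 2 hb
  have hDc : D = c * c := by
    apply mul_left_cancel₀ hb2
    linear_combination hsq
  exact hDnsq ⟨c, hDc⟩

lemma pell_ne_zero {D : Polynomial K} (hDnsq : ¬ IsSquare D)
    {p q : Polynomial K} (hpq : IsCoprime p q) (hq : q ≠ 0) :
    p ^ 2 - D * q ^ 2 ≠ 0 := by
  intro h0
  have hsq : D * q ^ 2 = p ^ 2 := by linear_combination -h0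
  have hdvd : q ^ 2 ∣ p ^ 2 := ⟨D, by linear_combination -hsq⟩
  have hqp : q ∣ p := (IsIntegrallyClosed.pow_dvd_pow_iff two_ne_zero).mp hdvd
  have hqu : IsUnit q := hpq.symm.isUnit_of_dvd hqp
  obtain ⟨r, hr, hCr⟩ := Polynomial.isUnit_iff.mp hqu
  have hr0 : r ≠ 0 := hr.ne_zero
  have hrr : (Polynomial.C r : Polynomial K) * Polynomial.C r⁻¹ = 1 := by
    rw [← Polynomial.C_mul, mul_inv_cancel₀ hr0, Polynomial.C_1]
  have hp2 : p ^ 2 = D * (Polynomial.C r) ^ 2 := by rw [hCr]; linear_combination h0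
  have h2 : (Polynomial.C r * Polynomial.C r⁻¹) ^ 2 = (1 : Polynomial K) := by
    rw [hrr]; ring
  have hDsq : D = (p * Polynomial.C r⁻¹) * (p * Polynomial.C r⁻¹) := by
    calc D = D * (Polynomial.C r * Polynomial.C r⁻¹) ^ 2 := by rw [h2, mul_one]
      _ = (D * (Polynomial.C r) ^ 2) * (Polynomial.C r⁻¹) ^ 2 := by ring
      _ = p ^ 2 * (Polynomial.C r⁻¹) ^ 2 := by rw [← hp2]
      _ = (p * Polynomial.C r⁻¹) * (p * Polynomial.C r⁻¹) := by ring
  exact hDnsq ⟨_, hDsq⟩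

end PaperCF

open PaperCF in
/-- Let `char K ≠ 2`, `D ∈ S_K` of degree `2d`, `√D = β` a square root
of `D` in `K((T⁻¹))`, and `p, q` coprime with `q ≠ 0`. Then `p/q` is, up to sign, a
convergent of `√D` iff `deg(p² − D q²) ≤ d − 1`. -/
theorem convergent_of_sqrt_iff_pell_degree {K : Type*} [Field K]
    (hchar : ringChar K ≠ 2) (D : Polynomial K)
    (hDeven : Even D.natDegree) (hDpos : 0 < D.natDegree)
    (hDnsq : ¬ IsSquare D) (hDlead : IsSquare D.leadingCoeff)
    (β : LaurentSeries K) (hβ : β ^ 2 = emb D)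
    (p q : Polynomial K) (hq : q ≠ 0) (hpq : IsCoprime p q) :
    (∃ n : ℕ, p * contQ β n = contP β n * q ∨ p * contQ β n = -(contP β n * q)) ↔
      (p ^ 2 - D * q ^ 2).degree ≤ ((D.natDegree / 2 - 1 : ℕ) : WithBot ℕ) := by
  classical
  have hD0 : D ≠ 0 := fun h => by simp [h] at hDpos
  set d : ℕ := D.natDegree / 2 with hdd
  obtain ⟨k, hk⟩ := hDeven
  have h2d : D.natDegree = 2 * d := by omega
  have hd1 : 1 ≤ d := by omega
  have hirr : ¬ IsRat β := sqrt_not_isRat hDnsq hβ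
  have hβ0 : β ≠ 0 := ne_zero_of_not_isRat hirr
  have hdgβ : dg β = (d : ℤ) := by
    have hm := dg_mul hβ0 hβ0
    rw [← sq, hβ, dg_emb hD0] at hm
    omega
  have hd' : 1 ≤ dg β := by rw [hdgβ]; exact_mod_cast hd1
  have h2K : (2 : K) ≠ 0 := Ring.two_ne_zero hchar
  have h2P : (2 : Polynomial K) ≠ 0 := fun h => h2K (by
    have := congrArg (fun f : Polynomial K => f.coeff 0) h
    simpa using this)
  have he2 : emb (2 : Polynomial K) = (2 : LaurentSeries K) := map_ofNat _ 2
  have hdeg2 : ((2 : Polynomial K)).natDegree = 0 := by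
    rw [show (2 : Polynomial K) = Polynomial.C (2 : K) from (map_ofNat Polynomial.C 2).symm]
    exact Polynomial.natDegree_C _
  constructor
  · rintro ⟨n, hcase⟩
    have hqn0 : contQ β n ≠ 0 := (contQ_spec hirr hd' n).1
    have hqndeg : (contQ β n).natDegree = qdeg β n := (contQ_spec hirr hd' n).2
    have hcopn : IsCoprime (contP β n) (contQ β n) := coprime_cont β n
    set W : Polynomial K := contP β n ^ 2 - D * contQ β n ^ 2 with hW
    have hEne : EE β n ≠ 0 := EE_ne_zero hirr hqn0
    have hdgEE : dg (EE β n) = -(qdeg β (n + 1) : ℤ) := dg_EE hirr hd' n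
    have hembW : emb W = (-EE β n) *
        (β * emb (contQ β n) * emb (2 : Polynomial K) + -EE β n) := by
      rw [hW, he2]
      simp only [map_sub, map_mul, map_pow, EE]
      linear_combination (emb (contQ β n)) ^ 2 * hβ
    have hx0 : β * emb (contQ β n) * emb (2 : Polynomial K) ≠ 0 :=
      mul_ne_zero (mul_ne_zero hβ0 (emb_ne_zero hqn0)) (emb_ne_zero h2P)
    have hdgx : dg (β * emb (contQ β n) * emb (2 : Polynomial K)) = (d : ℤ) + qdeg β n := by
      rw [dg_mul (mul_ne_zero hβ0 (emb_ne_zero hqn0)) (emb_ne_zero h2P),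
        dg_mul hβ0 (emb_ne_zero hqn0), dg_emb hqn0, dg_emb h2P, hqndeg, hdgβ, hdeg2]
      ring
    obtain ⟨hfne, hfdg⟩ := dg_add_eq_left
      (x := β * emb (contQ β n) * emb (2 : Polynomial K)) (y := -EE β n) hx0
      (by rw [dg_neg, hdgEE, hdgx]; omega)
    have hembW_ne : emb W ≠ 0 := by
      rw [hembW]; exact mul_ne_zero (neg_ne_zero.mpr hEne) hfne
    have hWne : W ≠ 0 := fun h => hembW_ne (by rw [h, map_zero])
    have hprod := dg_mul (neg_ne_zero.mpr hEne) hfne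
    rw [← hembW, dg_emb hWne, dg_neg, hdgEE, hfdg, hdgx] at hprod
    have hq1 : qdeg β (n + 1) = qdeg β n + (pq β (n + 1)).natDegree := qdeg_succ β n
    have hpq1 : 1 ≤ (pq β (n + 1)).natDegree := one_le_natDegree_pq hirr hd' (n + 1)
    have hWdeg : W.natDegree ≤ d - 1 := by omega
    have main : ∀ p' : Polynomial K, IsCoprime p' q → p' * contQ β n = contP β n * q →
        (p' ^ 2 - D * q ^ 2).degree ≤ ((d - 1 : ℕ) : WithBot ℕ) := by
      intro p' hpq' heq
      have h1 : q ∣ p' * contQ β n := ⟨contP β n, by linear_combination heq⟩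
      have hq_dvd_qn : q ∣ contQ β n := hpq'.symm.dvd_of_dvd_mul_left h1
      have h2 : contQ β n ∣ contP β n * q := ⟨p', by linear_combination -heq⟩
      have hqn_dvd_q : contQ β n ∣ q := hcopn.symm.dvd_of_dvd_mul_left h2
      obtain ⟨u, hu⟩ := associated_of_dvd_dvd hqn_dvd_q hq_dvd_qn
      obtain ⟨r, hr, hCr⟩ := Polynomial.isUnit_iff.mp u.isUnit
      have hqr : q = contQ β n * Polynomial.C r := by rw [hCr, hu]
      have hpr : p' = contP β n * Polynomial.C r := by
        apply mul_right_cancel₀ hqn0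
        linear_combination heq + contP β n * hqr
      have hfact : p' ^ 2 - D * q ^ 2 = W * (Polynomial.C r) ^ 2 := by
        rw [hpr, hqr, hW]; ring
      have hCr0 : Polynomial.C r ≠ 0 := Polynomial.C_ne_zero.mpr hr.ne_zero
      have hnd : (p' ^ 2 - D * q ^ 2).natDegree ≤ d - 1 := by
        rw [hfact, Polynomial.natDegree_mul hWne (pow_ne_zero 2 hCr0),
          Polynomial.natDegree_pow, Polynomial.natDegree_C]
        omega
      exact Polynomial.natDegree_le_iff_degree_le.mp hnd
    rcases hcase with hca | hca
    · exact main p hpq hca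
    · have h' : (-p) * contQ β n = contP β n * q := by linear_combination -hca
      have hres := main (-p) hpq.neg_left h'
      have he : (-p) ^ 2 - D * q ^ 2 = p ^ 2 - D * q ^ 2 := by ring
      rwa [he] at hres
  · intro hdeg
    have hWne : p ^ 2 - D * q ^ 2 ≠ 0 := pell_ne_zero hDnsq hpq hq
    have hnat : (p ^ 2 - D * q ^ 2).natDegree ≤ d - 1 :=
      Polynomial.natDegree_le_iff_degree_le.mpr hdeg
    set u := emb p - β * emb q with hu
    set v := emb p + β * emb q with hv
    have huv : u * v = emb (p ^ 2 - D * q ^ 2) := by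
      rw [hu, hv]
      simp only [map_sub, map_mul, map_pow]
      linear_combination (-(emb q) ^ 2) * hβ
    have huv0 : u * v ≠ 0 := by rw [huv]; exact emb_ne_zero hWne
    have hu0 : u ≠ 0 := left_ne_zero_of_mul huv0
    have hv0 : v ≠ 0 := right_ne_zero_of_mul huv0
    have hsum : dg u + dg v ≤ (d : ℤ) - 1 := by
      have hm := dg_mul hu0 hv0
      rw [huv, dg_emb hWne] at hm
      omega
    have hx0 : β * emb q * emb (2 : Polynomial K) ≠ 0 :=
      mul_ne_zero (mul_ne_zero hβ0 (emb_ne_zero hq)) (emb_ne_zero h2P)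
    have hdgx : dg (β * emb q * emb (2 : Polynomial K)) = (d : ℤ) + q.natDegree := by
      rw [dg_mul (mul_ne_zero hβ0 (emb_ne_zero hq)) (emb_ne_zero h2P),
        dg_mul hβ0 (emb_ne_zero hq), dg_emb hq, dg_emb h2P, hdgβ, hdeg2]
      ring
    have hmax : (d : ℤ) + q.natDegree ≤ max (dg u) (dg v) := by
      have hvu : v + -u = β * emb q * emb (2 : Polynomial K) := by
        rw [hu, hv, he2]; ring
      have hvu0 : v + -u ≠ 0 := by rw [hvu]; exact hx0
      have hle := dg_add_le hvu0
      rw [hvu, hdgx, dg_neg] at hle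
      omega
    have hcases : dg u ≤ -(q.natDegree : ℤ) - 1 ∨ dg v ≤ -(q.natDegree : ℤ) - 1 := by
      rcases max_cases (dg u) (dg v) with ⟨h1, _⟩ | ⟨h1, _⟩ <;> rw [h1] at hmax <;> omega
    rcases hcases with hc | hc
    · have hsmall : dg (emb q * β - emb p) < -(q.natDegree : ℤ) := by
        have he : emb q * β - emb p = -u := by rw [hu]; ring
        rw [he, dg_neg]
        omega
      obtain ⟨n, hn⟩ := conv_of_small hirr hd' hq hsmall
      exact ⟨n, Or.inl hn⟩
    · have hsmall : dg (emb q * β - emb (-p)) < -(q.natDegree : ℤ) := by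
        have he : emb q * β - emb (-p) = v := by rw [hv, map_neg]; ring
        rw [he]
        omega
      obtain ⟨n, hn⟩ := conv_of_small hirr hd' hq hsmall
      exact ⟨n, Or.inr (by linear_combination -hn)⟩
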